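/- Let T be a tree, and fix an Euler tour of the transformed directed multigraph (edges doubled, loops added). For any edge {u,v} of T, the arcs of the tour strictly between the occurrence of (u,v) and the occurrence of (v,u) are exactly the arcs with both endpoints in the component of T - {u,v} containing v. In particular, the subtree of v relative to parent u appears as a contiguous segment of the Euler tour. -/

import Mathlib

/-- `l` is an Euler tour of the arc multiset `arcs`: a nonempty closed walk using each
arc exactly once, where consecutive arcs chain (head of one arc = tail of the next)
and the tour closes up cyclically. -/
def IsEulerTour {V : Type*} (arcs : Multiset (V × V)) (l : List (V × V)) : Prop :=
  l ≠ [] ∧ (↑l : Multiset (V × V)) = arcs ∧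
    List.Chain' (fun a b => a.2 = b.1) l ∧
    ∀ h : l ≠ [], (l.getLast h).2 = (l.head h).1

/-- The arc multiset of the Euler-tour transformation of a graph `G`: each undirected
edge `{u,v}` is replaced by the two directed arcs `(u,v)`, `(v,u)`, and a self-loop
`(v,v)` is added at every vertex. -/
def treeArcs {V : Type*} [Fintype V] [DecidableEq V] (G : SimpleGraph V)
    [DecidableRel G.Adj] : Multiset (V × V) :=
  (Finset.univ.filter (fun a : V × V => G.Adj a.1 a.2)).val
    + Finset.univ.val.map (fun v : V => (v, v))


lemma aux_count_one {V : Type*} [Fintype V] [DecidableEq V] (G : SimpleGraph V)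
    [DecidableRel G.Adj] {a b : V} (hab : G.Adj a b) :
    Multiset.count (a, b) (treeArcs G) = 1 := by
  have hne : a ≠ b := hab.ne
  rw [treeArcs, Multiset.count_add]
  have h1 : Multiset.count (a, b) (Finset.univ.filter (fun a : V × V => G.Adj a.1 a.2)).val = 1 := by
    apply Multiset.count_eq_one_of_mem (Finset.nodup _)
    simp [hab]
  have h2 : Multiset.count (a, b) (Finset.univ.val.map (fun v : V => (v, v))) = 0 := by
    rw [Multiset.count_eq_zero]
    intro h
    obtain ⟨x, -, hx⟩ := Multiset.mem_map.mp h
    exact hne (by cases hx; rfl)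
  omega

lemma aux_unique_idx {α : Type*} [DecidableEq α] {l : List α} {x : α}
    (hc : l.count x = 1) {i j : ℕ} (hi : i < l.length) (hj : j < l.length)
    (hix : l.get ⟨i, hi⟩ = x) (hjx : l.get ⟨j, hj⟩ = x) : i = j := by
  by_contra hne
  have hdup : l.Duplicate x := by
    rw [List.duplicate_iff_exists_distinct_get]
    rcases Nat.lt_or_ge i j with h | h
    · exact ⟨⟨i, hi⟩, ⟨j, hj⟩, Fin.mk_lt_mk.mpr h, hix.symm, hjx.symm⟩
    · exact ⟨⟨j, hj⟩, ⟨i, hi⟩, Fin.mk_lt_mk.mpr (by omega), hjx.symm, hix.symm⟩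
  have := List.duplicate_iff_two_le_count.mp hdup
  omega

/-- Let `T` be a tree with an Euler tour `l` of the transformed multigraph,
rotated to start at the arc `(u,v)` for an edge `{u,v}` of `T`, and let `j` be the
position of the arc `(v,u)`. Then the arcs strictly between `(u,v)` and `(v,u)` (i.e. at
positions `k` with `0 < k < j`) are exactly the arcs with both endpoints in the
component of `T - {u,v}` containing `v`; in particular the subtree of `v` relative to
parent `u` appears as a contiguous segment of the tour. -/
theorem subtree_is_contiguous_segment
    {V : Type*} [Fintype V] [DecidableEq V] (G : SimpleGraph V)
    [DecidableRel G.Adj] (hT : G.IsTree) (u v : V) (huv : G.Adj u v)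
    (l : List (V × V)) (hl : IsEulerTour (treeArcs G) l)
    (hpos : 0 < l.length) (h0 : l.get ⟨0, hpos⟩ = (u, v))
    (j : ℕ) (hj : j < l.length) (hjv : l.get ⟨j, hj⟩ = (v, u)) :
    ∀ (k : ℕ) (hk : k < l.length),
      (0 < k ∧ k < j) ↔
        ((G.deleteEdges {s(u, v)}).Reachable v (l.get ⟨k, hk⟩).1 ∧
         (G.deleteEdges {s(u, v)}).Reachable v (l.get ⟨k, hk⟩).2) := by
  obtain ⟨hne, hmul, hchain, hclose⟩ := hl
  set G' := G.deleteEdges {s(u, v)} with hG'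
  set S : V → Prop := fun x => G'.Reachable v x with hS
  have hune : u ≠ v := huv.ne
  -- u is not reachable from v in G'
  have hSu : ¬ S u := by
    have hbridge : G.IsBridge s(u, v) :=
      (SimpleGraph.isAcyclic_iff_forall_adj_isBridge.mp hT.2) huv
    have := SimpleGraph.isBridge_iff.mp hbridge
    intro h
    exact this (h.symm : (G \ SimpleGraph.fromEdgeSet {s(u,v)}).Reachable u v)
  have hSv : S v := SimpleGraph.Reachable.refl v
  -- membership facts
  have hmem : ∀ a ∈ l, G.Adj a.1 a.2 ∨ a.1 = a.2 := by
    intro a ha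
    have : a ∈ treeArcs G := by
      rw [← hmul]; exact ha
    rw [treeArcs, Multiset.mem_add] at this
    rcases this with h | h
    · left
      have h' : a ∈ Finset.univ.filter (fun a : V × V => G.Adj a.1 a.2) := h
      exact (Finset.mem_filter.mp h').2
    · right; obtain ⟨x, -, hx⟩ := Multiset.mem_map.mp h; cases hx; rfl
  -- arcs other than (u,v),(v,u) preserve the side
  have hpres : ∀ a ∈ l, a ≠ (u, v) → a ≠ (v, u) → (S a.1 ↔ S a.2) := by
    intro a ha h1 h2
    rcases hmem a ha with hadj | heq
    · have hsym : s(a.1, a.2) ≠ s(u, v) := by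
        intro h
        rcases Sym2.eq_iff.mp h with ⟨e1, e2⟩ | ⟨e1, e2⟩
        · exact h1 (Prod.ext e1 e2)
        · exact h2 (Prod.ext e1 e2)
      have hadj' : G'.Adj a.1 a.2 := by
        rw [hG', SimpleGraph.deleteEdges_adj]
        exact ⟨hadj, by simpa using hsym⟩
      exact ⟨fun h => h.trans hadj'.reachable, fun h => h.trans hadj'.symm.reachable⟩
    · rw [heq]
  -- counts
  have hcount_uv := aux_count_one G huv
  rw [← hmul, Multiset.coe_count] at hcount_uv
  have hcount_vu := aux_count_one G huv.symm
  rw [← hmul, Multiset.coe_count] at hcount_vu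
  have huniq_uv : ∀ (k : ℕ) (hk : k < l.length), l.get ⟨k, hk⟩ = (u, v) → k = 0 :=
    fun k hk hkx => aux_unique_idx hcount_uv hk hpos hkx h0
  have huniq_vu : ∀ (k : ℕ) (hk : k < l.length), l.get ⟨k, hk⟩ = (v, u) → k = j :=
    fun k hk hkx => aux_unique_idx hcount_vu hk hj hkx hjv
  have hj0 : j ≠ 0 := by
    intro h; subst h
    rw [h0] at hjv
    exact hune (congrArg Prod.fst hjv)
  -- chain
  have hch : ∀ (k : ℕ) (hk1 : k + 1 < l.length),
      (l.get ⟨k, Nat.lt_of_succ_lt hk1⟩).2 = (l.get ⟨k + 1, hk1⟩).1 := by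
    intro k hk1
    have := List.isChain_iff_getElem.mp hchain k (by omega)
    exact this
  -- main invariant
  have main : ∀ (k : ℕ) (hk : k < l.length), (S (l.get ⟨k, hk⟩).1 ↔ (1 ≤ k ∧ k ≤ j)) := by
    intro k
    induction k with
    | zero =>
      intro hk
      rw [h0]
      simp [hSu]
    | succ n ih =>
      intro hk
      have hn : n < l.length := Nat.lt_of_succ_lt hk
      have hstep : (l.get ⟨n, hn⟩).2 = (l.get ⟨n + 1, hk⟩).1 := hch n hk
      by_cases h1 : l.get ⟨n, hn⟩ = (u, v)
      · have : n = 0 := huniq_uv n hn h1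
        subst this
        have : (l.get ⟨1, hk⟩).1 = v := by rw [← hstep, h1]
        rw [this]
        simp [hSv]
        omega
      · by_cases h2 : l.get ⟨n, hn⟩ = (v, u)
        · have : n = j := huniq_vu n hn h2
          subst this
          have : (l.get ⟨n + 1, hk⟩).1 = u := by rw [← hstep, h2]
          rw [this]
          simp [hSu]
        · have hn0 : n ≠ 0 := by
            intro h; subst h
            exact h1 (h0 ▸ rfl)
          have hnj : n ≠ j := by
            intro h; subst h
            exact h2 (hjv ▸ rfl)
          have := hpres _ (List.get_mem l ⟨n, hn⟩) h1 h2
          rw [← hstep, ← this, ih hn]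
          omega
  -- finish
  intro k hk
  constructor
  · rintro ⟨hk0, hkj⟩
    have hS1 : S (l.get ⟨k, hk⟩).1 := (main k hk).mpr ⟨hk0, le_of_lt hkj⟩
    have hk1 : k + 1 < l.length := by omega
    have hS2 : S (l.get ⟨k, hk⟩).2 := by
      rw [hch k hk1]
      exact (main (k + 1) hk1).mpr ⟨by omega, by omega⟩
    exact ⟨hS1, hS2⟩
  · rintro ⟨hS1, hS2⟩
    obtain ⟨hk1, hk2⟩ := (main k hk).mp hS1
    refine ⟨by omega, ?_⟩
    rcases lt_or_eq_of_le hk2 with h | h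
    · exact h
    · exfalso
      subst h
      have heq : l.get ⟨k, hk⟩ = (v, u) := hjv
      rw [heq] at hS2
      exact hSu hS2
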